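/- Let μ be a Λ-nice measure on ℝ^d, x ∈ ℝ^d, δ > 0, and suppose r = 5^j δ (j ≥ 0) satisfies μ(B(x, 5^{ℓ+1}δ)) ≥ 5^{s+1} μ(B(x, 5^ℓ δ)) for all 0 ≤ ℓ < j. Then ∫_{B(x,r)} max(δ, |x−y|)^{−s} dμ(y) ≤ C Λ for a constant C depending only on s and d. In particular, for K an s-dimensional CZ kernel with regularizations K_δ, |∫_{B(x,r)} [K_δ(y−x) − K_r(y−x)] dμ(y)| ≤ C Λ. -/

import Mathlib

open Classical MeasureTheory Metric

private lemma stmt19_pow_swap (p : ℝ) (n : ℕ) : ((5:ℝ) ^ p) ^ n = ((5:ℝ) ^ n) ^ p := by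
  rw [← Real.rpow_natCast ((5:ℝ) ^ p) n, ← Real.rpow_mul (by norm_num), mul_comm,
    Real.rpow_mul (by norm_num), Real.rpow_natCast]

private lemma stmt19_geom (n : ℕ) : ∑ i ∈ Finset.range n, (1/5:ℝ)^i ≤ 5/4 := by
  induction n with
  | zero => norm_num
  | succ n ih =>
    rw [Finset.sum_range_succ']
    have h : ∑ i ∈ Finset.range n, (1/5:ℝ)^(i+1)
        = (1/5) * ∑ i ∈ Finset.range n, (1/5:ℝ)^i := by
      rw [Finset.mul_sum]
      exact Finset.sum_congr rfl fun i _ => by ring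
    rw [h]
    simp only [pow_zero]
    linarith

private lemma stmt19_core {E : Type*} [NormedAddCommGroup E] [MeasurableSpace E] [BorelSpace E]
    (s : ℝ) (hs : 0 < s) (Λ : ℝ) (hΛ : 0 < Λ) (μ : Measure E)
    (hμ : ∀ (y : E) (ρ : ℝ), 0 < ρ → μ (ball y ρ) ≤ ENNReal.ofReal (Λ * ρ ^ s))
    (x : E) (δ : ℝ) (j : ℕ) (hδ : 0 < δ)
    (hgrow : ∀ ℓ : ℕ, ℓ < j →
      ENNReal.ofReal ((5 : ℝ) ^ (s + 1)) * μ (ball x ((5 : ℝ) ^ ℓ * δ))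
        ≤ μ (ball x ((5 : ℝ) ^ (ℓ + 1) * δ))) :
    ∫⁻ y in ball x ((5 : ℝ) ^ j * δ),
      ENNReal.ofReal (((max δ ‖x - y‖) ^ s)⁻¹) ∂μ
      ≤ ENNReal.ofReal (2 * (5:ℝ) ^ s * Λ) := by
  -- growth chain
  have hM' : ∀ k ℓ : ℕ, ℓ + k ≤ j →
      μ (ball x ((5:ℝ)^ℓ * δ)) * ENNReal.ofReal (((5:ℝ)^(s+1))^k)
        ≤ μ (ball x ((5:ℝ)^(ℓ+k) * δ)) := by
    intro k
    induction k with
    | zero => intro ℓ _; simp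
    | succ k ih =>
      intro ℓ h
      have h1 : ℓ + k ≤ j := by omega
      have h2 : ℓ + k < j := by omega
      calc μ (ball x ((5:ℝ)^ℓ * δ)) * ENNReal.ofReal (((5:ℝ)^(s+1))^(k+1))
          = ENNReal.ofReal ((5:ℝ)^(s+1)) *
            (μ (ball x ((5:ℝ)^ℓ * δ)) * ENNReal.ofReal (((5:ℝ)^(s+1))^k)) := by
            rw [pow_succ, ENNReal.ofReal_mul (by positivity)]; ring
        _ ≤ ENNReal.ofReal ((5:ℝ)^(s+1)) * μ (ball x ((5:ℝ)^(ℓ+k) * δ)) :=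
            mul_le_mul_right (ih ℓ h1) _
        _ ≤ μ (ball x ((5:ℝ)^(ℓ+k+1) * δ)) := hgrow (ℓ+k) h2
  -- measure of each ball
  have hμℓ : ∀ ℓ : ℕ, ℓ ≤ j →
      μ (ball x ((5:ℝ)^ℓ * δ)) ≤
        ENNReal.ofReal (Λ * ((5:ℝ)^j * δ)^s * (((5:ℝ)^(s+1))^(j-ℓ))⁻¹) := by
    intro ℓ hℓ
    have hkey := hM' (j - ℓ) ℓ (by omega)
    rw [Nat.add_sub_cancel' hℓ] at hkey
    have ha : (0:ℝ) < ((5:ℝ)^(s+1))^(j-ℓ) := by positivity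
    calc μ (ball x ((5:ℝ)^ℓ * δ))
        = μ (ball x ((5:ℝ)^ℓ * δ)) * ENNReal.ofReal (((5:ℝ)^(s+1))^(j-ℓ)) *
            ENNReal.ofReal ((((5:ℝ)^(s+1))^(j-ℓ))⁻¹) := by
          rw [mul_assoc, ← ENNReal.ofReal_mul ha.le, mul_inv_cancel₀ ha.ne',
            ENNReal.ofReal_one, mul_one]
      _ ≤ μ (ball x ((5:ℝ)^j * δ)) * ENNReal.ofReal ((((5:ℝ)^(s+1))^(j-ℓ))⁻¹) :=
          mul_le_mul_left hkey _
      _ ≤ ENNReal.ofReal (Λ * ((5:ℝ)^j * δ)^s) *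
            ENNReal.ofReal ((((5:ℝ)^(s+1))^(j-ℓ))⁻¹) :=
          mul_le_mul_left (hμ x _ (by positivity)) _
      _ = ENNReal.ofReal (Λ * ((5:ℝ)^j * δ)^s * (((5:ℝ)^(s+1))^(j-ℓ))⁻¹) :=
          (ENNReal.ofReal_mul (by positivity)).symm
  -- pointwise bound by sum of indicators
  have hpt : ∀ y : E,
      (ball x ((5:ℝ)^j * δ)).indicator
        (fun y => ENNReal.ofReal (((max δ ‖x - y‖) ^ s)⁻¹)) y
      ≤ ∑ ℓ ∈ Finset.range (j+1), (ball x ((5:ℝ)^ℓ * δ)).indicator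
          (fun _ => ENNReal.ofReal ((5:ℝ)^s * (((5:ℝ)^ℓ * δ) ^ s)⁻¹)) y := by
    intro y
    by_cases hy : y ∈ ball x ((5:ℝ)^j * δ)
    · rw [Set.indicator_of_mem hy]
      have hd : dist y x = ‖x - y‖ := by rw [dist_eq_norm, norm_sub_rev]
      have hPj : ‖x - y‖ < (5:ℝ)^j * δ := by rw [← hd]; exact mem_ball.mp hy
      have hex : ∃ ℓ : ℕ, ‖x - y‖ < (5:ℝ)^ℓ * δ := ⟨j, hPj⟩
      set L := Nat.find hex with hLdef
      have hL : ‖x - y‖ < (5:ℝ)^L * δ := Nat.find_spec hex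
      have hLj : L ≤ j := Nat.find_le hPj
      have hmem : y ∈ ball x ((5:ℝ)^L * δ) := mem_ball.mpr (by rw [hd]; exact hL)
      have hlow : (5:ℝ)^L * δ / 5 ≤ max δ ‖x - y‖ := by
        rcases Nat.eq_zero_or_pos L with h0 | h0
        · rw [h0]
          simp only [pow_zero, one_mul]
          calc δ / 5 ≤ δ := by linarith
            _ ≤ max δ ‖x - y‖ := le_max_left _ _
        · obtain ⟨m, hm⟩ : ∃ m, L = m + 1 := ⟨L - 1, by omega⟩
          have hmin : ¬ (‖x - y‖ < (5:ℝ)^m * δ) :=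
            Nat.find_min hex (by rw [← hLdef]; omega)
          push_neg at hmin
          rw [hm]
          calc (5:ℝ)^(m+1) * δ / 5 = (5:ℝ)^m * δ := by rw [pow_succ]; ring
            _ ≤ ‖x - y‖ := hmin
            _ ≤ max δ ‖x - y‖ := le_max_right _ _
      have hpos : (0:ℝ) < (5:ℝ)^L * δ / 5 := by positivity
      have h1 : ((5:ℝ)^L * δ / 5) ^ s ≤ (max δ ‖x - y‖) ^ s :=
        Real.rpow_le_rpow hpos.le hlow hs.le
      have h3 : ((max δ ‖x - y‖) ^ s)⁻¹ ≤ (5:ℝ)^s * (((5:ℝ)^L * δ) ^ s)⁻¹ := by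
        have h2 : ((5:ℝ)^L * δ / 5) ^ s = ((5:ℝ)^L * δ) ^ s / (5:ℝ)^s := by
          rw [Real.div_rpow (by positivity) (by norm_num)]
        have h4 : ((max δ ‖x - y‖) ^ s)⁻¹ ≤ (((5:ℝ)^L * δ / 5) ^ s)⁻¹ := by
          exact inv_anti₀ (by positivity) h1
        calc ((max δ ‖x - y‖) ^ s)⁻¹ ≤ (((5:ℝ)^L * δ / 5) ^ s)⁻¹ := h4
          _ = (5:ℝ)^s * (((5:ℝ)^L * δ) ^ s)⁻¹ := by
            rw [h2, inv_div, div_eq_mul_inv]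
      calc ENNReal.ofReal (((max δ ‖x - y‖) ^ s)⁻¹)
          ≤ ENNReal.ofReal ((5:ℝ)^s * (((5:ℝ)^L * δ) ^ s)⁻¹) :=
            ENNReal.ofReal_le_ofReal h3
        _ = (ball x ((5:ℝ)^L * δ)).indicator
              (fun _ => ENNReal.ofReal ((5:ℝ)^s * (((5:ℝ)^L * δ) ^ s)⁻¹)) y :=
            (Set.indicator_of_mem hmem (fun _ => ENNReal.ofReal ((5:ℝ)^s * (((5:ℝ)^L * δ) ^ s)⁻¹))).symm
        _ ≤ ∑ ℓ ∈ Finset.range (j+1), (ball x ((5:ℝ)^ℓ * δ)).indicator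
              (fun _ => ENNReal.ofReal ((5:ℝ)^s * (((5:ℝ)^ℓ * δ) ^ s)⁻¹)) y :=
            Finset.single_le_sum (f := fun ℓ => (ball x ((5:ℝ)^ℓ * δ)).indicator
              (fun _ => ENNReal.ofReal ((5:ℝ)^s * (((5:ℝ)^ℓ * δ) ^ s)⁻¹)) y)
              (fun i _ => zero_le) (Finset.mem_range.mpr (by omega))
    · rw [Set.indicator_of_notMem hy]; exact zero_le
  -- per-term real identity
  have hterm : ∀ ℓ : ℕ, ℓ ≤ j →
      (5:ℝ)^s * (((5:ℝ)^ℓ * δ) ^ s)⁻¹ *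
        (Λ * ((5:ℝ)^j * δ)^s * (((5:ℝ)^(s+1))^(j-ℓ))⁻¹)
      = Λ * (5:ℝ)^s * (1/5:ℝ)^(j-ℓ) := by
    intro ℓ hℓ
    set k := j - ℓ with hk
    have hjk : j = ℓ + k := by omega
    have e1 : (5:ℝ)^j * δ = (5:ℝ)^k * ((5:ℝ)^ℓ * δ) := by rw [hjk, pow_add]; ring
    have e2 : ((5:ℝ)^j * δ)^s = ((5:ℝ)^k)^s * ((5:ℝ)^ℓ * δ)^s := by
      rw [e1, Real.mul_rpow (by positivity) (by positivity)]
    have e3 : ((5:ℝ)^(s+1))^k = ((5:ℝ)^k)^s * (5:ℝ)^k := by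
      rw [stmt19_pow_swap, Real.rpow_add (by positivity), Real.rpow_one]
    have e4 : ((1:ℝ)/5)^k = ((5:ℝ)^k)⁻¹ := by rw [one_div, inv_pow]
    rw [e2, e3, e4]
    have hA : ((5:ℝ)^ℓ * δ)^s ≠ 0 := by positivity
    have hB : ((5:ℝ)^k)^s ≠ 0 := by positivity
    have hy : ((5:ℝ):ℝ)^k ≠ 0 := by positivity
    field_simp
  -- put it together
  calc ∫⁻ y in ball x ((5:ℝ)^j * δ), ENNReal.ofReal (((max δ ‖x - y‖) ^ s)⁻¹) ∂μ
      = ∫⁻ y, (ball x ((5:ℝ)^j * δ)).indicator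
          (fun y => ENNReal.ofReal (((max δ ‖x - y‖) ^ s)⁻¹)) y ∂μ := by
        rw [lintegral_indicator measurableSet_ball]
    _ ≤ ∫⁻ y, ∑ ℓ ∈ Finset.range (j+1), (ball x ((5:ℝ)^ℓ * δ)).indicator
          (fun _ => ENNReal.ofReal ((5:ℝ)^s * (((5:ℝ)^ℓ * δ) ^ s)⁻¹)) y ∂μ :=
        lintegral_mono hpt
    _ = ∑ ℓ ∈ Finset.range (j+1), ∫⁻ y, (ball x ((5:ℝ)^ℓ * δ)).indicator
          (fun _ => ENNReal.ofReal ((5:ℝ)^s * (((5:ℝ)^ℓ * δ) ^ s)⁻¹)) y ∂μ :=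
        lintegral_finset_sum _ (fun ℓ _ => measurable_const.indicator measurableSet_ball)
    _ = ∑ ℓ ∈ Finset.range (j+1), ENNReal.ofReal ((5:ℝ)^s * (((5:ℝ)^ℓ * δ) ^ s)⁻¹) *
          μ (ball x ((5:ℝ)^ℓ * δ)) := by
        exact Finset.sum_congr rfl fun ℓ _ => lintegral_indicator_const measurableSet_ball _
    _ ≤ ∑ ℓ ∈ Finset.range (j+1), ENNReal.ofReal (Λ * (5:ℝ)^s * (1/5:ℝ)^(j-ℓ)) := by
        apply Finset.sum_le_sum
        intro ℓ hℓ
        have hℓj : ℓ ≤ j := by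
          have := Finset.mem_range.mp hℓ; omega
        calc ENNReal.ofReal ((5:ℝ)^s * (((5:ℝ)^ℓ * δ) ^ s)⁻¹) * μ (ball x ((5:ℝ)^ℓ * δ))
            ≤ ENNReal.ofReal ((5:ℝ)^s * (((5:ℝ)^ℓ * δ) ^ s)⁻¹) *
              ENNReal.ofReal (Λ * ((5:ℝ)^j * δ)^s * (((5:ℝ)^(s+1))^(j-ℓ))⁻¹) :=
              mul_le_mul_right (hμℓ ℓ hℓj) _
          _ = ENNReal.ofReal ((5:ℝ)^s * (((5:ℝ)^ℓ * δ) ^ s)⁻¹ *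
              (Λ * ((5:ℝ)^j * δ)^s * (((5:ℝ)^(s+1))^(j-ℓ))⁻¹)) :=
              (ENNReal.ofReal_mul (by positivity)).symm
          _ = ENNReal.ofReal (Λ * (5:ℝ)^s * (1/5:ℝ)^(j-ℓ)) := by rw [hterm ℓ hℓj]
    _ = ENNReal.ofReal (∑ ℓ ∈ Finset.range (j+1), Λ * (5:ℝ)^s * (1/5:ℝ)^(j-ℓ)) :=
        (ENNReal.ofReal_sum_of_nonneg (fun ℓ _ => by positivity)).symm
    _ ≤ ENNReal.ofReal (2 * (5:ℝ)^s * Λ) := by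
        apply ENNReal.ofReal_le_ofReal
        have hsum : ∑ ℓ ∈ Finset.range (j+1), Λ * (5:ℝ)^s * (1/5:ℝ)^(j-ℓ)
            = Λ * (5:ℝ)^s * ∑ ℓ ∈ Finset.range (j+1), (1/5:ℝ)^(j-ℓ) := by
          rw [Finset.mul_sum]
        have hre : ∑ ℓ ∈ Finset.range (j+1), (1/5:ℝ)^(j-ℓ)
            = ∑ i ∈ Finset.range (j+1), (1/5:ℝ)^i := by
          rw [← Finset.sum_range_reflect]
          exact Finset.sum_congr rfl fun i hi => by
            congr 1
            have := Finset.mem_range.mp hi; omega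
        have h54 := stmt19_geom (j+1)
        rw [hsum, hre]
        have h5s : (0:ℝ) < (5:ℝ)^s := by positivity
        nlinarith [mul_pos hΛ h5s]

/-- For a `Λ`-nice `μ`, if `r = 5^j δ` and
`μ(B(x,5^{ℓ+1}δ)) ≥ 5^{s+1}μ(B(x,5^ℓ δ))` for all `0 ≤ ℓ < j`, then
`∫_{B(x,r)} max(δ,|x−y|)^{−s} dμ(y) ≤ CΛ` with `C = C(s,d)`; in particular, for an
`s`-dimensional CZ kernel `K` with regularizations `K_δ`,
`|∫_{B(x,r)} [K_δ(y−x) − K_r(y−x)] dμ(y)| ≤ CΛ`. -/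
theorem stmt19 (d : ℕ) (hd : 2 ≤ d) (s α : ℝ) (hs : 0 < s) (hsd : s < d)
    (hα0 : 0 < α) (hα1 : α ≤ 1) :
    ∃ C : ℝ, 0 < C ∧
      ∀ (Λ : ℝ), 0 < Λ →
        ∀ (μ : Measure (EuclideanSpace ℝ (Fin d))),
          (∀ (y : EuclideanSpace ℝ (Fin d)) (ρ : ℝ), 0 < ρ →
            μ (ball y ρ) ≤ ENNReal.ofReal (Λ * ρ ^ s)) →
          ∀ (x : EuclideanSpace ℝ (Fin d)) (δ : ℝ) (j : ℕ), 0 < δ →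
            (∀ ℓ : ℕ, ℓ < j →
              ENNReal.ofReal ((5 : ℝ) ^ (s + 1)) * μ (ball x ((5 : ℝ) ^ ℓ * δ))
                ≤ μ (ball x ((5 : ℝ) ^ (ℓ + 1) * δ))) →
            (∫⁻ y in ball x ((5 : ℝ) ^ j * δ),
                ENNReal.ofReal (((max δ ‖x - y‖) ^ s)⁻¹) ∂μ ≤ ENNReal.ofReal (C * Λ))
            ∧ ∀ (K : EuclideanSpace ℝ (Fin d) → ℂ),
                (∀ z, z ≠ 0 → ‖K z‖ ≤ (‖z‖ ^ s)⁻¹) →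
                (∀ z, K (-z) = -K z) →
                ‖∫ y in ball x ((5 : ℝ) ^ j * δ),
                    ((if y - x = 0 then 0 else
                        K (y - x) * (((‖y - x‖ / max δ ‖y - x‖) ^ (s + α) : ℝ) : ℂ))
                      - (if y - x = 0 then 0 else
                        K (y - x) *
                          (((‖y - x‖ / max ((5 : ℝ) ^ j * δ) ‖y - x‖) ^ (s + α) : ℝ) : ℂ))) ∂μ‖
                  ≤ C * Λ := by
  refine ⟨4 * (5:ℝ)^s, by positivity, ?_⟩
  intro Λ hΛ μ hμ x δ j hδ hgrow
  have hcore := stmt19_core s hs Λ hΛ μ hμ x δ j hδ hgrow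
  constructor
  · exact hcore.trans (ENNReal.ofReal_le_ofReal (by nlinarith [Real.rpow_pos_of_pos (by norm_num : (0:ℝ) < 5) s]))
  · intro K hK hodd
    set r' : ℝ := (5:ℝ)^j * δ with hr'def
    have hr' : 0 < r' := by positivity
    have hδr' : δ ≤ r' := by
      have : (1:ℝ) ≤ (5:ℝ)^j := one_le_pow₀ (by norm_num)
      calc δ = 1 * δ := (one_mul δ).symm
        _ ≤ (5:ℝ)^j * δ := by nlinarith
    -- pointwise bound on the integrand
    set g : EuclideanSpace ℝ (Fin d) → ℂ := fun y =>
      ((if y - x = 0 then 0 else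
          K (y - x) * (((‖y - x‖ / max δ ‖y - x‖) ^ (s + α) : ℝ) : ℂ))
        - (if y - x = 0 then 0 else
          K (y - x) * (((‖y - x‖ / max r' ‖y - x‖) ^ (s + α) : ℝ) : ℂ))) with hgdef
    have hptg : ∀ y, ‖g y‖ ≤ 2 * ((max δ ‖x - y‖) ^ s)⁻¹ := by
      intro y
      by_cases h0 : y - x = 0
      · simp only [hgdef, h0, if_pos, sub_zero]
        have : (0:ℝ) < ((max δ ‖x - y‖) ^ s)⁻¹ := by
          have : 0 < max δ ‖x - y‖ := lt_of_lt_of_le hδ (le_max_left _ _)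
          positivity
        simp
        positivity
      · have hzn : 0 < ‖y - x‖ := norm_pos_iff.mpr h0
        have hxy : ‖x - y‖ = ‖y - x‖ := norm_sub_rev x y
        have key : ∀ ρ : ℝ, δ ≤ ρ →
            ‖K (y - x) * (((‖y - x‖ / max ρ ‖y - x‖) ^ (s + α) : ℝ) : ℂ)‖
              ≤ ((max δ ‖y - x‖) ^ s)⁻¹ := by
          intro ρ hρ
          have hMpos : 0 < max ρ ‖y - x‖ := lt_of_lt_of_le (lt_of_lt_of_le hδ hρ) (le_max_left _ _)
          have hMpos' : 0 < max δ ‖y - x‖ := lt_of_lt_of_le hδ (le_max_left _ _)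
          have hrat0 : 0 < ‖y - x‖ / max ρ ‖y - x‖ := div_pos hzn hMpos
          have hrat1 : ‖y - x‖ / max ρ ‖y - x‖ ≤ 1 :=
            div_le_one_of_le₀ (le_max_right _ _) hMpos.le
          have hstep1 : (‖y - x‖ / max ρ ‖y - x‖) ^ (s + α)
              ≤ (‖y - x‖ / max ρ ‖y - x‖) ^ s :=
            Real.rpow_le_rpow_of_exponent_ge hrat0 hrat1 (by linarith)
          have hstep2 : (‖y - x‖ / max ρ ‖y - x‖) ^ s
              = ‖y - x‖ ^ s / (max ρ ‖y - x‖) ^ s := by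
            rw [Real.div_rpow hzn.le hMpos.le]
          have hnorm : ‖K (y - x) * (((‖y - x‖ / max ρ ‖y - x‖) ^ (s + α) : ℝ) : ℂ)‖
              = ‖K (y - x)‖ * (‖y - x‖ / max ρ ‖y - x‖) ^ (s + α) := by
            rw [norm_mul, Complex.norm_real, Real.norm_of_nonneg (by positivity)]
          rw [hnorm]
          have hKb := hK (y - x) h0
          have hzs : (0:ℝ) < ‖y - x‖ ^ s := Real.rpow_pos_of_pos hzn s
          calc ‖K (y - x)‖ * (‖y - x‖ / max ρ ‖y - x‖) ^ (s + α)
              ≤ (‖y - x‖ ^ s)⁻¹ * (‖y - x‖ ^ s / (max ρ ‖y - x‖) ^ s) := by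
                rw [← hstep2]
                exact mul_le_mul hKb hstep1 (by positivity) (by positivity)
            _ = ((max ρ ‖y - x‖) ^ s)⁻¹ := by
                field_simp
            _ ≤ ((max δ ‖y - x‖) ^ s)⁻¹ := by
                apply inv_anti₀ (Real.rpow_pos_of_pos hMpos' s)
                exact Real.rpow_le_rpow hMpos'.le (max_le_max hρ le_rfl) hs.le
        have h1 := key δ le_rfl
        have h2 := key r' hδr'
        calc ‖g y‖ ≤ ‖(if y - x = 0 then (0:ℂ) else
              K (y - x) * (((‖y - x‖ / max δ ‖y - x‖) ^ (s + α) : ℝ) : ℂ))‖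
            + ‖(if y - x = 0 then (0:ℂ) else
              K (y - x) * (((‖y - x‖ / max r' ‖y - x‖) ^ (s + α) : ℝ) : ℂ))‖ :=
            norm_sub_le _ _
          _ ≤ ((max δ ‖y - x‖) ^ s)⁻¹ + ((max δ ‖y - x‖) ^ s)⁻¹ := by
            rw [if_neg h0, if_neg h0]
            exact add_le_add h1 h2
          _ = 2 * ((max δ ‖x - y‖) ^ s)⁻¹ := by rw [hxy]; ring
    -- integral bound
    have hbound : ∫⁻ y in ball x r', ENNReal.ofReal ‖g y‖ ∂μ
        ≤ ENNReal.ofReal (4 * (5:ℝ)^s * Λ) := by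
      calc ∫⁻ y in ball x r', ENNReal.ofReal ‖g y‖ ∂μ
          ≤ ∫⁻ y in ball x r', ENNReal.ofReal (2 * ((max δ ‖x - y‖) ^ s)⁻¹) ∂μ :=
            lintegral_mono fun y => ENNReal.ofReal_le_ofReal (hptg y)
        _ = ∫⁻ y in ball x r', ENNReal.ofReal 2 *
              ENNReal.ofReal (((max δ ‖x - y‖) ^ s)⁻¹) ∂μ := by
            apply lintegral_congr
            intro y
            rw [ENNReal.ofReal_mul (by norm_num)]
        _ = ENNReal.ofReal 2 *
              ∫⁻ y in ball x r', ENNReal.ofReal (((max δ ‖x - y‖) ^ s)⁻¹) ∂μ :=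
            lintegral_const_mul' _ _ ENNReal.ofReal_ne_top
        _ ≤ ENNReal.ofReal 2 * ENNReal.ofReal (2 * (5:ℝ)^s * Λ) :=
            mul_le_mul_right hcore _
        _ = ENNReal.ofReal (2 * (2 * (5:ℝ)^s * Λ)) :=
            (ENNReal.ofReal_mul (by norm_num)).symm
        _ = ENNReal.ofReal (4 * (5:ℝ)^s * Λ) := by ring_nf
    calc ‖∫ y in ball x r', g y ∂μ‖
        ≤ (∫⁻ y in ball x r', ENNReal.ofReal ‖g y‖ ∂μ).toReal :=
          norm_integral_le_lintegral_norm g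
      _ ≤ (ENNReal.ofReal (4 * (5:ℝ)^s * Λ)).toReal :=
          ENNReal.toReal_mono ENNReal.ofReal_ne_top hbound
      _ = 4 * (5:ℝ)^s * Λ := ENNReal.toReal_ofReal (by positivity)
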